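/- arXiv:2311.10901 — 3 statements merged into one kernel-verified Lean document; each statement's English description precedes it below -/
import Mathlib

section
/- For every natural n, integer t with 0 < t <= n/2, and x in [0,1], the quantity S_{n,t}(x) := sum over k from t to n-t of |k/n - x| * p_{n,k}(x) satisfies S_{n,t}(x) <= x*(1-x) / sqrt(t/2). -/
private lemma choose_id_aux (m j : ℕ) (hj : j + 1 ≤ m) :
    m.choose j * (m - j) = m * (m - 1).choose j := by
  obtain ⟨m', rfl⟩ : ∃ m', m = m' + 1 := ⟨m - 1, by omega⟩
  have hjm : j ≤ m' := by omega
  have h1 : (m' + 1).choose (m' + 1 - j) = (m' + 1).choose j :=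
    Nat.choose_symm (by omega)
  have h2 : m'.choose (m' - j) = m'.choose j := Nat.choose_symm hjm
  have h3 := Nat.add_one_mul_choose_eq m' (m' - j)
  have hmj : m' - j + 1 = m' + 1 - j := by omega
  rw [hmj, h2, h1] at h3
  simp only [Nat.add_sub_cancel]
  exact h3.symm

private lemma choose_id (n k : ℕ) (hk1 : 1 ≤ k) (hk2 : k + 1 ≤ n) :
    k * (n - k) * n.choose k = n * (n - 1) * (n - 2).choose (k - 1) := by
  obtain ⟨n', rfl⟩ : ∃ n', n = n' + 1 := ⟨n - 1, by omega⟩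
  obtain ⟨k', rfl⟩ : ∃ k', k = k' + 1 := ⟨k - 1, by omega⟩
  have h1 := Nat.add_one_mul_choose_eq n' k'
  have h2 : n'.choose k' * (n' - k') = n' * (n' - 1).choose k' :=
    choose_id_aux n' k' (by omega)
  have hsub : n' + 1 - (k' + 1) = n' - k' := by omega
  simp only [Nat.add_sub_cancel, hsub]
  calc (k' + 1) * (n' - k') * (n' + 1).choose (k' + 1)
      = ((n' + 1).choose (k' + 1) * (k' + 1)) * (n' - k') := by ring
    _ = ((n' + 1) * n'.choose k') * (n' - k') := by rw [h1]
    _ = (n' + 1) * (n'.choose k' * (n' - k')) := by ring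
    _ = (n' + 1) * (n' * (n' - 1).choose k') := by rw [h2]
    _ = (n' + 1) * n' * (n' - 1).choose k' := by ring

theorem S_nt_bound (n t : ℕ) (ht : 0 < t) (ht2 : 2 * t ≤ n)
    (x : ℝ) (hx : x ∈ Set.Icc (0:ℝ) 1) :
    ∑ k ∈ Finset.Icc t (n - t),
      |(k : ℝ) / n - x| * ((n.choose k : ℝ) * x ^ k * (1 - x) ^ (n - k))
      ≤ x * (1 - x) / Real.sqrt ((t : ℝ) / 2) := by
  obtain ⟨hx0, hx1⟩ := hx
  have hx1' : (0:ℝ) ≤ 1 - x := by linarith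
  have hn2 : 2 ≤ n := le_trans (by omega) ht2
  have hnR : (0:ℝ) < n := by positivity
  have htR : (0:ℝ) < t := by exact_mod_cast ht
  set p : ℕ → ℝ := fun k => (n.choose k : ℝ) * x ^ k * (1 - x) ^ (n - k) with hp
  have hpnn : ∀ k, 0 ≤ p k := fun k => by
    simp only [hp]; positivity
  set q : ℕ → ℝ := fun j => ((n-2).choose j : ℝ) * x ^ j * (1 - x) ^ (n - 2 - j) with hq
  have hqnn : ∀ j, 0 ≤ q j := fun j => by
    simp only [hq]; positivity
  -- second moment bound
  have hvar : ∑ k ∈ Finset.range (n+1), ((k:ℝ)/n - x)^2 * p k = x * (1 - x) / n := by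
    have hv := bernstein.variance (n := n) (by omega) ⟨x, hx0, hx1⟩
    rw [← hv, ← Fin.sum_univ_eq_sum_range (fun k => ((k:ℝ)/n - x)^2 * p k) (n+1)]
    apply Finset.sum_congr rfl
    intro k _
    simp only [bernstein_apply, bernstein.z, hp]
    ring
  have hA : ∑ k ∈ Finset.Icc t (n-t), ((k:ℝ)/n - x)^2 * p k ≤ x * (1 - x) / n := by
    rw [← hvar]
    apply Finset.sum_le_sum_of_subset_of_nonneg
    · intro k hk
      simp only [Finset.mem_Icc] at hk
      simp only [Finset.mem_range]
      omega
    · intro k _ _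
      have := hpnn k
      positivity
  -- mass bound
  have hqsum : ∑ j ∈ Finset.range (n-1), q j = 1 := by
    have haux := add_pow x (1-x) (n-2)
    have hn1 : n - 2 + 1 = n - 1 := by omega
    rw [hn1] at haux
    have hone : x + (1 - x) = 1 := by ring
    rw [hone, one_pow] at haux
    calc ∑ j ∈ Finset.range (n-1), q j
        = ∑ m ∈ Finset.range (n-1), x ^ m * (1-x) ^ (n-2-m) * ((n-2).choose m : ℝ) := by
          apply Finset.sum_congr rfl
          intro j _
          simp only [hq]
          ring
      _ = 1 := haux.symm
  have hkey : ∀ k ∈ Finset.Icc t (n-t), p k ≤ 2 * n / t * (x * (1-x)) * q (k-1) := by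
    intro k hk
    simp only [Finset.mem_Icc] at hk
    have hk1 : 1 ≤ k := le_trans ht hk.1
    have hk2 : k + 1 ≤ n := by omega
    have hidN := choose_id n k hk1 hk2
    have hcast : (k:ℝ) * ((n:ℝ) - k) * (n.choose k : ℝ)
        = (n:ℝ) * ((n:ℝ) - 1) * ((n-2).choose (k-1) : ℝ) := by
      have hc := congrArg (Nat.cast : ℕ → ℝ) hidN
      push_cast [Nat.cast_sub (show k ≤ n by omega), Nat.cast_sub (show 1 ≤ n by omega)] at hc
      convert hc using 2 <;> push_cast <;> ring
    have hid : (k:ℝ) * ((n:ℝ) - k) * p k = n * ((n:ℝ)-1) * (x * (1-x)) * q (k-1) := by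
      simp only [hp, hq]
      have hxk : x ^ k = x * x ^ (k-1) := by
        rw [← pow_succ']
        congr 1
        omega
      have hxnk : (1-x) ^ (n-k) = (1-x) * (1-x) ^ (n-2-(k-1)) := by
        rw [← pow_succ']
        congr 1
        omega
      rw [hxk, hxnk]
      linear_combination (x * (1-x) * x ^ (k-1) * (1-x) ^ (n-2-(k-1))) * hcast
    have hkpos : (0:ℝ) < (k:ℝ) := by exact_mod_cast hk1
    have hnk : (0:ℝ) < (n:ℝ) - k := by
      have : (k:ℝ) < n := by exact_mod_cast (show k < n by omega)
      linarith
    have hkk : (0:ℝ) < (k:ℝ) * ((n:ℝ) - k) := by positivity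
    have hlow : (t:ℝ) * ((n:ℝ)/2) ≤ (k:ℝ) * ((n:ℝ) - k) := by
      have h1 : (t:ℝ) ≤ k := by exact_mod_cast hk.1
      have h2 : (k:ℝ) ≤ (n:ℝ) - t := by
        have h2' : (k:ℝ) ≤ ((n - t : ℕ) : ℝ) := by exact_mod_cast hk.2
        rwa [Nat.cast_sub (show t ≤ n by omega)] at h2'
      have h3 : (t:ℝ) ≤ (n:ℝ) / 2 := by
        have : ((2*t : ℕ):ℝ) ≤ (n:ℝ) := by exact_mod_cast ht2
        push_cast at this
        linarith
      nlinarith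
    have hpk : p k = (n:ℝ) * ((n:ℝ)-1) * (x * (1-x)) * q (k-1) / ((k:ℝ) * ((n:ℝ) - k)) := by
      field_simp
      linarith [hid]
    have hq' := hqnn (k-1)
    have hxx : (0:ℝ) ≤ x * (1-x) := by positivity
    rw [hpk, div_le_iff₀ hkk]
    have h2n : (n:ℝ) * ((n:ℝ)-1) ≤ (2 * (n:ℝ) / t) * ((t:ℝ) * ((n:ℝ)/2)) := by
      have he : (2 * (n:ℝ) / t) * ((t:ℝ) * ((n:ℝ)/2)) = (n:ℝ) * n := by
        field_simp
      rw [he]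
      nlinarith [hnR]
    have hc0 : (0:ℝ) ≤ 2 * (n:ℝ) / t * (x * (1-x)) * q (k-1) :=
      mul_nonneg (by positivity) hq'
    calc (n:ℝ) * ((n:ℝ)-1) * (x * (1-x)) * q (k-1)
        ≤ (2 * (n:ℝ) / t) * ((t:ℝ) * ((n:ℝ)/2)) * (x * (1-x)) * q (k-1) :=
          mul_le_mul_of_nonneg_right (mul_le_mul_of_nonneg_right h2n hxx) hq'
      _ = (2 * (n:ℝ) / t * (x * (1-x)) * q (k-1)) * ((t:ℝ) * ((n:ℝ)/2)) := by ring
      _ ≤ (2 * (n:ℝ) / t * (x * (1-x)) * q (k-1)) * ((k:ℝ) * ((n:ℝ) - k)) :=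
          mul_le_mul_of_nonneg_left hlow hc0
      _ = 2 * (n:ℝ) / (t:ℝ) * (x * (1 - x)) * q (k - 1) * ((k:ℝ) * ((n:ℝ) - (k:ℝ))) := by
          ring
  have hB : ∑ k ∈ Finset.Icc t (n-t), p k ≤ 2 * n / t * (x * (1-x)) := by
    have hre : ∑ k ∈ Finset.Icc t (n-t), q (k-1)
        = ∑ j ∈ (Finset.Icc t (n-t)).image (· - 1), q j := by
      refine (Finset.sum_image ?_).symm
      intro a ha b hb hab
      simp only [Finset.mem_coe, Finset.mem_Icc] at ha hb
      have hab' : a - 1 = b - 1 := hab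
      omega
    have hsub : (Finset.Icc t (n-t)).image (· - 1) ⊆ Finset.range (n-1) := by
      intro j hj
      simp only [Finset.mem_image, Finset.mem_Icc] at hj
      obtain ⟨k, hk, rfl⟩ := hj
      simp only [Finset.mem_range]
      omega
    calc ∑ k ∈ Finset.Icc t (n-t), p k
        ≤ ∑ k ∈ Finset.Icc t (n-t), 2 * n / t * (x * (1-x)) * q (k-1) :=
          Finset.sum_le_sum hkey
      _ = 2 * n / t * (x * (1-x)) * ∑ k ∈ Finset.Icc t (n-t), q (k-1) := by
          rw [Finset.mul_sum]
      _ ≤ 2 * n / t * (x * (1-x)) * 1 := by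
          apply mul_le_mul_of_nonneg_left _ (by positivity)
          rw [← hqsum, hre]
          exact Finset.sum_le_sum_of_subset_of_nonneg hsub (fun j _ _ => hqnn j)
      _ = 2 * n / t * (x * (1-x)) := by ring
  -- Cauchy–Schwarz
  have hCS : (∑ k ∈ Finset.Icc t (n-t), |(k:ℝ)/n - x| * p k) ^ 2
      ≤ (∑ k ∈ Finset.Icc t (n-t), ((k:ℝ)/n - x)^2 * p k)
        * (∑ k ∈ Finset.Icc t (n-t), p k) := by
    apply Finset.sum_sq_le_sum_mul_sum_of_sq_eq_mul
    · intro k _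
      have := hpnn k
      positivity
    · intro k _
      exact hpnn k
    · intro k _
      rw [mul_pow, sq_abs]
      ring
  set S := ∑ k ∈ Finset.Icc t (n-t), |(k:ℝ)/n - x| * p k with hS
  have hSnn : 0 ≤ S := Finset.sum_nonneg fun k _ => by
    have := hpnn k
    positivity
  have hbound : S ^ 2 ≤ 2 / t * (x * (1-x))^2 := by
    calc S ^ 2 ≤ (∑ k ∈ Finset.Icc t (n-t), ((k:ℝ)/n - x)^2 * p k)
        * (∑ k ∈ Finset.Icc t (n-t), p k) := hCS
      _ ≤ (x * (1-x) / n) * (2 * n / t * (x * (1-x))) := by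
          apply mul_le_mul hA hB
          · exact Finset.sum_nonneg fun k _ => hpnn k
          · positivity
      _ = 2 / t * (x * (1-x))^2 := by
          field_simp
  -- conclude
  have hrhs : x * (1 - x) / Real.sqrt ((t:ℝ)/2) = Real.sqrt (2 / t * (x * (1-x))^2) := by
    rw [Real.sqrt_mul (by positivity), Real.sqrt_sq (by positivity)]
    rw [div_eq_mul_inv, ← Real.sqrt_inv]
    have : ((t:ℝ)/2)⁻¹ = 2 / t := by field_simp
    rw [this, mul_comm]
  rw [hrhs]
  have hfin := Real.sqrt_le_sqrt hbound
  rwa [Real.sqrt_sq hSnn] at hfin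
end

section
/- For every continuous function f on [0,1] and every natural n >= 1, the Bernstein polynomial B_n(f)(x) = sum_{k=0}^n f(k/n) binom(n,k) x^k (1-x)^(n-k) satisfies sup_{x in [0,1]} |f(x) - B_n(f)(x)| <= (5/4) * omega_f(n^{-1/2}), where omega_f is the modulus of continuity of f. -/
/-- Modulus of continuity of `f` on `[0,1]`. -/
noncomputable def modCont (f : ℝ → ℝ) (δ : ℝ) : ℝ :=
  sSup {d : ℝ | ∃ x ∈ Set.Icc (0:ℝ) 1, ∃ y ∈ Set.Icc (0:ℝ) 1,
    |x - y| ≤ δ ∧ d = |f x - f y|}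

lemma modCont_bdd (f : ℝ → ℝ) (hf : ContinuousOn f (Set.Icc (0:ℝ) 1)) (δ : ℝ) :
    BddAbove {d : ℝ | ∃ x ∈ Set.Icc (0:ℝ) 1, ∃ y ∈ Set.Icc (0:ℝ) 1,
      |x - y| ≤ δ ∧ d = |f x - f y|} := by
  obtain ⟨C, hC⟩ := isCompact_Icc.exists_bound_of_continuousOn hf
  refine ⟨2 * C, ?_⟩
  rintro d ⟨a, ha, b, hb, -, rfl⟩
  have h1 := hC a ha
  have h2 := hC b hb
  simp only [Real.norm_eq_abs] at h1 h2
  calc |f a - f b| ≤ |f a| + |f b| := abs_sub _ _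
    _ ≤ 2 * C := by linarith

lemma modCont_nonneg (f : ℝ → ℝ) (hf : ContinuousOn f (Set.Icc (0:ℝ) 1)) {δ : ℝ}
    (hδ : 0 ≤ δ) : 0 ≤ modCont f δ := by
  have h0 : (0:ℝ) ∈ {d : ℝ | ∃ x ∈ Set.Icc (0:ℝ) 1, ∃ y ∈ Set.Icc (0:ℝ) 1,
      |x - y| ≤ δ ∧ d = |f x - f y|} :=
    ⟨0, by norm_num, 0, by norm_num, by simpa using hδ, by simp⟩
  exact le_csSup (modCont_bdd f hf δ) h0

lemma le_modCont (f : ℝ → ℝ) (hf : ContinuousOn f (Set.Icc (0:ℝ) 1)) {δ a b : ℝ}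
    (ha : a ∈ Set.Icc (0:ℝ) 1) (hb : b ∈ Set.Icc (0:ℝ) 1) (hab : |a - b| ≤ δ) :
    |f a - f b| ≤ modCont f δ :=
  le_csSup (modCont_bdd f hf δ) ⟨a, ha, b, hb, hab, rfl⟩

lemma chain_modCont (f : ℝ → ℝ) (hf : ContinuousOn f (Set.Icc (0:ℝ) 1)) {δ a b : ℝ}
    (ha : a ∈ Set.Icc (0:ℝ) 1) (hb : b ∈ Set.Icc (0:ℝ) 1) (m : ℕ) (hm : 1 ≤ m)
    (hab : |a - b| ≤ m * δ) : |f a - f b| ≤ m * modCont f δ := by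
  have hm0 : (0:ℝ) < m := by exact_mod_cast hm
  set g : ℕ → ℝ := fun j => f (a + j * (b - a) / m) with hg
  have hz : ∀ j : ℕ, j ≤ m → a + j * (b - a) / m ∈ Set.Icc (0:ℝ) 1 := by
    intro j hj
    have hjm : (j:ℝ) ≤ m := by exact_mod_cast hj
    have hj0 : (0:ℝ) ≤ j := by positivity
    have ht0 : 0 ≤ (j:ℝ)/m := by positivity
    have ht1 : (j:ℝ)/m ≤ 1 := by rw [div_le_one hm0]; exact hjm
    have key : a + j*(b-a)/m = (1 - (j:ℝ)/m)*a + ((j:ℝ)/m)*b := by field_simp; ring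
    obtain ⟨ha0, ha1⟩ := ha
    obtain ⟨hb0, hb1⟩ := hb
    rw [key]
    constructor
    · nlinarith
    · nlinarith
  have tel : g m - g 0 = ∑ j ∈ Finset.range m, (g (j+1) - g j) :=
    (Finset.sum_range_sub g m).symm
  have hg0 : g 0 = f a := by simp [hg]
  have hgm : g m = f b := by
    simp only [hg]
    congr 1
    field_simp
    ring
  have step : ∀ j ∈ Finset.range m, |g (j+1) - g j| ≤ modCont f δ := by
    intro j hj
    rw [Finset.mem_range] at hj
    apply le_modCont f hf (hz (j+1) hj) (hz j hj.le)
    have hd : (a + (j+1:ℕ) * (b - a) / m) - (a + j * (b - a) / m) = (b-a)/m := by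
      push_cast
      field_simp
      ring
    rw [hd, abs_div, abs_of_pos hm0, div_le_iff₀ hm0, abs_sub_comm]
    linarith [hab]
  calc |f a - f b| = |g m - g 0| := by rw [hg0, hgm, abs_sub_comm]
    _ ≤ ∑ j ∈ Finset.range m, |g (j+1) - g j| := by
        rw [tel]; exact Finset.abs_sum_le_sum_abs _ _
    _ ≤ ∑ j ∈ Finset.range m, modCont f δ := Finset.sum_le_sum step
    _ = m * modCont f δ := by rw [Finset.sum_const, Finset.card_range, nsmul_eq_mul]

lemma sq_modCont (f : ℝ → ℝ) (hf : ContinuousOn f (Set.Icc (0:ℝ) 1)) {δ a b : ℝ}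
    (hδ : 0 < δ) (ha : a ∈ Set.Icc (0:ℝ) 1) (hb : b ∈ Set.Icc (0:ℝ) 1) :
    |f a - f b| ≤ (1 + (a-b)^2/δ^2) * modCont f δ := by
  set t : ℝ := |a - b| / δ with htdef
  have ht0 : 0 ≤ t := by positivity
  set m : ℕ := max ⌈t⌉₊ 1 with hmdef
  have hm : 1 ≤ m := le_max_right _ _
  have htm : t ≤ m := (Nat.le_ceil t).trans (by exact_mod_cast Nat.cast_le.mpr (le_max_left _ _))
  have h1 : |a - b| ≤ m * δ := by
    rw [show |a - b| = t * δ from (div_mul_cancel₀ _ hδ.ne').symm]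
    exact mul_le_mul_of_nonneg_right htm hδ.le
  have ht2 : t^2 = (a-b)^2/δ^2 := by
    rw [htdef, div_pow, sq_abs]
  have h2 : (m:ℝ) ≤ 1 + (a-b)^2/δ^2 := by
    rw [← ht2]
    by_cases hc : t ≤ 1
    · have : ⌈t⌉₊ ≤ 1 := Nat.ceil_le.mpr (by simpa using hc)
      have hm1 : m = 1 := by omega
      rw [hm1]; push_cast; nlinarith
    · push_neg at hc
      have hce : 1 ≤ ⌈t⌉₊ := Nat.one_le_ceil_iff.mpr (by linarith)
      have hm1 : m = ⌈t⌉₊ := by omega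
      have := Nat.ceil_lt_add_one ht0
      rw [hm1]
      nlinarith
  calc |f a - f b| ≤ m * modCont f δ := chain_modCont f hf ha hb m hm h1
    _ ≤ (1 + (a-b)^2/δ^2) * modCont f δ :=
        mul_le_mul_of_nonneg_right h2 (modCont_nonneg f hf hδ.le)

theorem bernstein_approx (f : ℝ → ℝ) (hf : ContinuousOn f (Set.Icc (0:ℝ) 1))
    (n : ℕ) (hn : 1 ≤ n) (x : ℝ) (hx : x ∈ Set.Icc (0:ℝ) 1) :
    |f x - ∑ k ∈ Finset.range (n + 1),
        f ((k : ℝ) / n) * ((n.choose k : ℝ) * x ^ k * (1 - x) ^ (n - k))|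
      ≤ 5 / 4 * modCont f ((n : ℝ) ^ (-(1/2 : ℝ))) := by
  have hn0 : (0:ℝ) < n := by exact_mod_cast hn
  set δ : ℝ := (n : ℝ) ^ (-(1/2 : ℝ)) with hδdef
  have hδ : 0 < δ := Real.rpow_pos_of_pos hn0 _
  have hδ2 : δ^2 = (n:ℝ)⁻¹ := by
    rw [hδdef, ← Real.rpow_natCast ((n:ℝ) ^ (-(1/2 : ℝ))) 2, ← Real.rpow_mul hn0.le]
    norm_num
    exact Real.rpow_neg_one _
  set b : ℕ → ℝ := fun k => (n.choose k : ℝ) * x ^ k * (1 - x) ^ (n - k) with hb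
  have hbnn : ∀ k ∈ Finset.range (n+1), 0 ≤ b k := by
    intro k _
    obtain ⟨hx0, hx1⟩ := hx
    have : (0:ℝ) ≤ 1 - x := by linarith
    positivity
  set X : unitInterval := ⟨x, hx⟩ with hX
  have hbern : ∀ k : ℕ, bernstein n k X = b k := by
    intro k; rw [bernstein_apply]
  have hp : ∑ k ∈ Finset.range (n+1), b k = 1 := by
    have := bernstein.probability n X
    rw [Fin.sum_univ_eq_sum_range (fun k => bernstein n k X)] at this
    simpa only [hbern] using this
  have hv : ∑ k ∈ Finset.range (n+1), (x - k/n)^2 * b k = x * (1-x) / n := by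
    have := bernstein.variance (Nat.pos_iff_ne_zero.mp hn) X
    simp only [bernstein.z] at this
    rw [Fin.sum_univ_eq_sum_range (fun k => ((X:ℝ) - (k:ℝ)/n)^2 * bernstein n k X)] at this
    simpa only [hbern] using this
  have hkn : ∀ k ∈ Finset.range (n+1), ((k:ℝ)/n) ∈ Set.Icc (0:ℝ) 1 := by
    intro k hk
    rw [Finset.mem_range] at hk
    have : (k:ℝ) ≤ n := by exact_mod_cast Nat.lt_succ_iff.mp hk
    constructor
    · positivity
    · rw [div_le_one hn0]; exact this
  have key : f x - ∑ k ∈ Finset.range (n+1), f ((k:ℝ)/n) * b k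
      = ∑ k ∈ Finset.range (n+1), (f x - f ((k:ℝ)/n)) * b k := by
    rw [show ∀ s : Finset ℕ, ∑ k ∈ s, (f x - f ((k:ℝ)/n)) * b k
        = ∑ k ∈ s, (f x * b k - f ((k:ℝ)/n) * b k) from fun s => by
          apply Finset.sum_congr rfl; intro k _; ring]
    rw [Finset.sum_sub_distrib, ← Finset.mul_sum, hp, mul_one]
  set ω : ℝ := modCont f δ with hω
  have hωnn : 0 ≤ ω := modCont_nonneg f hf hδ.le
  calc |f x - ∑ k ∈ Finset.range (n + 1), f ((k : ℝ) / n) * b k|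
      = |∑ k ∈ Finset.range (n+1), (f x - f ((k:ℝ)/n)) * b k| := by rw [key]
    _ ≤ ∑ k ∈ Finset.range (n+1), |(f x - f ((k:ℝ)/n)) * b k| :=
        Finset.abs_sum_le_sum_abs _ _
    _ ≤ ∑ k ∈ Finset.range (n+1), (1 + (x - (k:ℝ)/n)^2/δ^2) * ω * b k := by
        apply Finset.sum_le_sum
        intro k hk
        rw [abs_mul, abs_of_nonneg (hbnn k hk)]
        exact mul_le_mul_of_nonneg_right (sq_modCont f hf hδ hx (hkn k hk)) (hbnn k hk)
    _ = ω * (∑ k ∈ Finset.range (n+1), b k)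
        + ω * (δ^2)⁻¹ * ∑ k ∈ Finset.range (n+1), (x - (k:ℝ)/n)^2 * b k := by
        rw [Finset.mul_sum, Finset.mul_sum, ← Finset.sum_add_distrib]
        apply Finset.sum_congr rfl
        intro k _
        field_simp
    _ = ω + ω * n * (x * (1-x) / n) := by
        rw [hp, hv, hδ2, mul_one, inv_inv]
    _ = ω * (1 + x * (1-x)) := by field_simp
    _ ≤ 5 / 4 * ω := by
        nlinarith [mul_nonneg hωnn (sq_nonneg (x - 1/2))]
end

section
/- The union over all n of the Bernstein lattices B_n is dense in C_Z([0,1]) with respect to the uniform metric: for every continuous f on [0,1] with f(0), f(1) integers and every epsilon > 0, there exist n and integers q_0,...,q_n such that |f(x) - sum_{k=0}^n q_k binom(n,k) x^k (1-x)^(n-k)| < epsilon for all x in [0,1]. -/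
open Finset

-- telescoping
lemma tele (a : ℕ → ℝ) (s t : ℕ) (h : s ≤ t) :
    ∑ k ∈ Finset.Ico s t, (a (k+1) - a k) = a t - a s := by
  induction t, h using Nat.le_induction with
  | base => simp
  | succ t ht ih =>
      rw [Finset.sum_Ico_succ_top (by omega), ih]; ring

-- Abel summation
lemma abel_sum (F G : ℕ → ℝ) (s t : ℕ) (h : s < t) :
    ∑ k ∈ Finset.Ico (s+1) (t+1), (F k - F (k-1)) * G k
      = (∑ k ∈ Finset.Ico (s+1) t, F k * (G k - G (k+1))) + F t * G t - F s * G (s+1) := by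
  induction t, h using Nat.le_induction with
  | base =>
      rw [Finset.sum_Ico_succ_top (by omega)]
      simp only [Finset.sum_empty, Nat.add_sub_cancel, Nat.succ_eq_add_one, Finset.Ico_self]
      ring
  | succ t ht ih =>
      rw [Finset.sum_Ico_succ_top (by omega), ih, Finset.sum_Ico_succ_top (by omega)]
      simp only [Nat.add_sub_cancel]
      ring

-- total variation bound for unimodal sequences
lemma tv_bound (a : ℕ → ℝ) (B : ℝ) (hB : 0 ≤ B) (m s t : ℕ)
    (h1 : ∀ k, k < m → a k ≤ a (k+1)) (h2 : ∀ k, m ≤ k → a (k+1) ≤ a k)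
    (ha0 : ∀ k, 0 ≤ a k) (haB : ∀ k, s ≤ k → k ≤ t → a k ≤ B) :
    ∑ k ∈ Finset.Ico s t, |a k - a (k+1)| ≤ 2*B := by
  rcases le_or_gt t s with hts | hst
  · rw [Finset.Ico_eq_empty (by omega)]; simp; linarith
  rcases le_or_gt t m with htm | hmt
  · -- increasing on [s,t)
    have : ∀ k ∈ Finset.Ico s t, |a k - a (k+1)| = a (k+1) - a k := by
      intro k hk; simp only [Finset.mem_Ico] at hk
      rw [abs_sub_comm, abs_of_nonneg (by linarith [h1 k (by omega)])]
    rw [Finset.sum_congr rfl this, tele a s t (by omega)]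
    have := ha0 s; have := haB t (by omega) le_rfl; linarith
  rcases le_or_gt m s with hms | hsm
  · have : ∀ k ∈ Finset.Ico s t, |a k - a (k+1)| = a k - a (k+1) := by
      intro k hk; simp only [Finset.mem_Ico] at hk
      rw [abs_of_nonneg (by linarith [h2 k (by omega)])]
    rw [Finset.sum_congr rfl this]
    have : ∑ k ∈ Finset.Ico s t, (a k - a (k+1)) = -(∑ k ∈ Finset.Ico s t, (a (k+1) - a k)) := by
      rw [← Finset.sum_neg_distrib]; apply Finset.sum_congr rfl; intros; ring
    rw [this, tele a s t (by omega)]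
    have := ha0 t; have := haB s le_rfl (by omega); linarith
  · -- s < m < t
    rw [← Finset.sum_Ico_consecutive _ (by omega : s ≤ m) (by omega : m ≤ t)]
    have e1 : ∀ k ∈ Finset.Ico s m, |a k - a (k+1)| = a (k+1) - a k := by
      intro k hk; simp only [Finset.mem_Ico] at hk
      rw [abs_sub_comm, abs_of_nonneg (by linarith [h1 k (by omega)])]
    have e2 : ∀ k ∈ Finset.Ico m t, |a k - a (k+1)| = a k - a (k+1) := by
      intro k hk; simp only [Finset.mem_Ico] at hk
      rw [abs_of_nonneg (by linarith [h2 k (by omega)])]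
    rw [Finset.sum_congr rfl e1, Finset.sum_congr rfl e2, tele a s m (by omega)]
    have : ∑ k ∈ Finset.Ico m t, (a k - a (k+1)) = -(∑ k ∈ Finset.Ico m t, (a (k+1) - a k)) := by
      rw [← Finset.sum_neg_distrib]; apply Finset.sum_congr rfl; intros; ring
    rw [this, tele a m t (by omega)]
    have := ha0 s; have := ha0 t; have := haB m (by omega) (by omega); linarith


open Real

lemma stirling_lb {j : ℕ} (hj : 1 ≤ j) : Real.sqrt π ≤ Stirling.stirlingSeq j := by
  obtain ⟨i, rfl⟩ : ∃ i, j = i + 1 := ⟨j - 1, by omega⟩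
  have h : Filter.Tendsto (Stirling.stirlingSeq ∘ Nat.succ) Filter.atTop (nhds (Real.sqrt π)) := by
    exact Stirling.tendsto_stirlingSeq_sqrt_pi.comp (Filter.tendsto_add_atTop_nat 1)
  exact Stirling.stirlingSeq'_antitone.le_of_tendsto h i

lemma stirling_ub {j : ℕ} (hj : 1 ≤ j) : Stirling.stirlingSeq j ≤ Real.exp 1 / Real.sqrt 2 := by
  obtain ⟨i, rfl⟩ : ∃ i, j = i + 1 := ⟨j - 1, by omega⟩
  have := Stirling.stirlingSeq'_antitone (Nat.zero_le i)
  simpa [Stirling.stirlingSeq_one] using this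

lemma fact_eq {j : ℕ} (hj : 1 ≤ j) :
    (j.factorial : ℝ) = Stirling.stirlingSeq j * (Real.sqrt (2*j) * ((j:ℝ)/Real.exp 1)^j) := by
  have h1 : 0 < (j:ℝ) := by exact_mod_cast hj
  have hD : 0 < Real.sqrt (2*j) * ((j:ℝ)/Real.exp 1)^j :=
    mul_pos (Real.sqrt_pos.2 (by linarith)) (pow_pos (div_pos h1 (Real.exp_pos 1)) j)
  rw [Stirling.stirlingSeq, div_mul_cancel₀ _ (ne_of_gt hD)]

lemma fact_lb {j : ℕ} (hj : 1 ≤ j) :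
    Real.sqrt 2 * Real.sqrt π * Real.sqrt j * ((j:ℝ)/Real.exp 1)^j ≤ (j.factorial : ℝ) := by
  have h1 : 0 < (j:ℝ) := by exact_mod_cast hj
  have hs : Real.sqrt (2*j) = Real.sqrt 2 * Real.sqrt j := Real.sqrt_mul (by norm_num) _
  rw [fact_eq hj, hs]
  have hD : 0 ≤ Real.sqrt 2 * Real.sqrt (j:ℝ) * ((j:ℝ)/Real.exp 1)^j := by positivity
  nlinarith [stirling_lb hj, mul_le_mul_of_nonneg_right (stirling_lb hj) hD]

lemma fact_ub {j : ℕ} (hj : 1 ≤ j) :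
    (j.factorial : ℝ) ≤ Real.exp 1 * Real.sqrt j * ((j:ℝ)/Real.exp 1)^j := by
  have h1 : 0 < (j:ℝ) := by exact_mod_cast hj
  have hs : Real.sqrt (2*j) = Real.sqrt 2 * Real.sqrt j := Real.sqrt_mul (by norm_num) _
  have h2 : (0:ℝ) < Real.sqrt 2 := Real.sqrt_pos.2 (by norm_num)
  rw [fact_eq hj, hs]
  have key := mul_le_mul_of_nonneg_right (stirling_ub hj)
      (show (0:ℝ) ≤ Real.sqrt 2*(Real.sqrt j*((j:ℝ)/Real.exp 1)^j) by positivity)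
  have he : Real.exp 1 / Real.sqrt 2 * Real.sqrt 2 = Real.exp 1 := div_mul_cancel₀ _ (ne_of_gt h2)
  have e2 : Real.exp 1/Real.sqrt 2*(Real.sqrt 2*(Real.sqrt j*((j:ℝ)/Real.exp 1)^j))
      = Real.exp 1*(Real.sqrt j*((j:ℝ)/Real.exp 1)^j) := by rw [← mul_assoc, he]
  linarith [key, e2]

set_option maxHeartbeats 2000000 in
lemma choose_bound {n k : ℕ} (hk1 : 1 ≤ k) (hkn : k < n) :
    (n.choose k : ℝ) * ((k:ℝ)^k * (((n-k:ℕ)):ℝ)^(n-k) / (n:ℝ)^n)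
      ≤ Real.sqrt ((n:ℝ) / ((k:ℝ) * ((n-k:ℕ):ℝ))) := by
  set m : ℕ := n - k with hm
  have hm1 : 1 ≤ m := by omega
  have hn1 : 1 ≤ n := by omega
  set K : ℝ := (k:ℝ) with hK
  set M : ℝ := (m:ℝ) with hM
  set N : ℝ := (n:ℝ) with hN
  have hKpos : 0 < K := by rw [hK]; exact_mod_cast (by omega : 0 < k)
  have hMpos : 0 < M := by rw [hM]; exact_mod_cast (by omega : 0 < m)
  have hNpos : 0 < N := by rw [hN]; exact_mod_cast (by omega : 0 < n)
  have hepos : (0:ℝ) < Real.exp 1 := Real.exp_pos 1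
  have h22 : Real.sqrt 2 * Real.sqrt 2 = 2 := Real.mul_self_sqrt (by norm_num)
  have hpi : Real.sqrt π * Real.sqrt π = π := Real.mul_self_sqrt Real.pi_nonneg
  have hexp : Real.exp K * Real.exp M = Real.exp N := by
    rw [← Real.exp_add]
    congr 1
    rw [hK, hM, hN]
    have : k + m = n := by omega
    exact_mod_cast congrArg (Nat.cast : ℕ → ℝ) this
  have hC : (n.choose k : ℝ) = (n.factorial : ℝ) / ((k.factorial : ℝ) * (m.factorial : ℝ)) := by
    rw [Nat.cast_choose ℝ hkn.le]
  have hden1 := fact_lb hk1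
  have hden2 := fact_lb hm1
  have hnum := fact_ub hn1
  have hd1pos : (0:ℝ) < Real.sqrt 2 * Real.sqrt π * Real.sqrt K * (K/Real.exp 1)^k := by
    positivity
  have hd2pos : (0:ℝ) < Real.sqrt 2 * Real.sqrt π * Real.sqrt M * (M/Real.exp 1)^m := by
    positivity
  have hchoose : (n.choose k : ℝ) ≤ (Real.exp 1 * Real.sqrt N * (N/Real.exp 1)^n) /
      ((Real.sqrt 2 * Real.sqrt π * Real.sqrt K * (K/Real.exp 1)^k) *
       (Real.sqrt 2 * Real.sqrt π * Real.sqrt M * (M/Real.exp 1)^m)) := by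
    rw [hC]
    apply div_le_div₀ (by positivity) hnum (by positivity)
    exact mul_le_mul hden1 hden2 hd2pos.le (le_trans hd1pos.le hden1)
  have hrt : Real.sqrt (N/(K*M)) = Real.sqrt N/(Real.sqrt K * Real.sqrt M) := by
    rw [Real.sqrt_div hNpos.le, Real.sqrt_mul hKpos.le]
  have claim1 : (K/Real.exp 1)^k*(M/Real.exp 1)^m*N^n = (N/Real.exp 1)^n*(K^k*M^m) := by
    field_simp
    rw [div_pow, div_pow, div_pow, show n = k + m by omega, pow_add, pow_add]
    ring
  have hee : Real.exp 1 ≤ 2 * π := by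
    nlinarith [Real.exp_one_lt_d9, Real.pi_gt_three]
  calc (n.choose k : ℝ) * (K^k * M^m / N^n)
      ≤ ((Real.exp 1 * Real.sqrt N * (N/Real.exp 1)^n) /
      ((Real.sqrt 2 * Real.sqrt π * Real.sqrt K * (K/Real.exp 1)^k) *
       (Real.sqrt 2 * Real.sqrt π * Real.sqrt M * (M/Real.exp 1)^m))) * (K^k * M^m / N^n) := by
        apply mul_le_mul_of_nonneg_right hchoose (by positivity)
    _ ≤ Real.sqrt N/(Real.sqrt K * Real.sqrt M) := by
        have lhseq : ((Real.exp 1 * Real.sqrt N * (N/Real.exp 1)^n) /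
            ((Real.sqrt 2 * Real.sqrt π * Real.sqrt K * (K/Real.exp 1)^k) *
             (Real.sqrt 2 * Real.sqrt π * Real.sqrt M * (M/Real.exp 1)^m))) * (K^k * M^m / N^n)
            = (Real.exp 1 * (((N/Real.exp 1)^n * (K^k*M^m)) *
                (Real.sqrt N * Real.sqrt K * Real.sqrt M))) /
              (((Real.sqrt 2 * Real.sqrt π * Real.sqrt K * (K/Real.exp 1)^k) *
               (Real.sqrt 2 * Real.sqrt π * Real.sqrt M * (M/Real.exp 1)^m)) * N^n *
                (Real.sqrt K * Real.sqrt M)) := by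
          rw [div_mul_div_comm]
          rw [div_eq_div_iff (by positivity) (by positivity)]
          ring
        rw [lhseq, div_le_div_iff₀ (by positivity) (by positivity)]
        have rhseq : Real.sqrt N *
            (((Real.sqrt 2 * Real.sqrt π * Real.sqrt K * (K/Real.exp 1)^k) *
              (Real.sqrt 2 * Real.sqrt π * Real.sqrt M * (M/Real.exp 1)^m)) * N^n *
               (Real.sqrt K * Real.sqrt M))
            = (2*π) * (((N/Real.exp 1)^n * (K^k*M^m)) *
                (Real.sqrt N * Real.sqrt K * Real.sqrt M)) * (Real.sqrt K * Real.sqrt M) := by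
          rw [← claim1]
          linear_combination (Real.sqrt π * Real.sqrt π * (Real.sqrt K * (K/Real.exp 1)^k *
              Real.sqrt M * (M/Real.exp 1)^m) * N^n * Real.sqrt N * (Real.sqrt K * Real.sqrt M)) * h22
            + (2 * (Real.sqrt K * (K/Real.exp 1)^k * Real.sqrt M * (M/Real.exp 1)^m) * N^n *
              Real.sqrt N * (Real.sqrt K * Real.sqrt M)) * hpi
        rw [rhseq]
        have := mul_le_mul_of_nonneg_right hee
          (show (0:ℝ) ≤ (((N/Real.exp 1)^n * (K^k*M^m)) *
              (Real.sqrt N * Real.sqrt K * Real.sqrt M)) * (Real.sqrt K * Real.sqrt M) by positivity)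
        nlinarith [this]
    _ = Real.sqrt (N/(K*M)) := hrt.symm

set_option maxHeartbeats 1000000 in
lemma amgm_bound {n k : ℕ} (hk1 : 1 ≤ k) (hkn : k < n) {x : ℝ} (hx0 : 0 ≤ x) (hx1 : x ≤ 1) :
    x^k * (1-x)^(n-k) ≤ (k:ℝ)^k * ((n-k:ℕ):ℝ)^(n-k) / (n:ℝ)^n := by
  have hKpos : (0:ℝ) < (k:ℝ) := by exact_mod_cast (by omega : 0 < k)
  have hMpos : (0:ℝ) < ((n-k:ℕ):ℝ) := by exact_mod_cast (by omega : 0 < n - k)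
  have hNpos : (0:ℝ) < (n:ℝ) := by exact_mod_cast (by omega : 0 < n)
  have hKMN : (k:ℝ) + ((n-k:ℕ):ℝ) = (n:ℝ) := by
    exact_mod_cast congrArg (Nat.cast : ℕ → ℝ) (by omega : k + (n-k) = n)
  have hw : (k:ℝ)/(n:ℝ) + ((n-k:ℕ):ℝ)/(n:ℝ) = 1 := by
    field_simp
    exact hKMN
  have hA0 : (0:ℝ) ≤ x*(n:ℝ)/(k:ℝ) := div_nonneg (mul_nonneg hx0 hNpos.le) hKpos.le
  have hB0 : (0:ℝ) ≤ (1-x)*(n:ℝ)/((n-k:ℕ):ℝ) :=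
    div_nonneg (mul_nonneg (by linarith) hNpos.le) hMpos.le
  have h := Real.geom_mean_le_arith_mean2_weighted
    (div_nonneg hKpos.le hNpos.le) (div_nonneg hMpos.le hNpos.le)
    hA0
    hB0 hw
  have hr : (k:ℝ)/(n:ℝ)*(x*(n:ℝ)/(k:ℝ)) + ((n-k:ℕ):ℝ)/(n:ℝ)*((1-x)*(n:ℝ)/((n-k:ℕ):ℝ)) = 1 := by
    field_simp
    ring
  rw [hr] at h
  have h2 : ((x*(n:ℝ)/(k:ℝ))^(((k:ℝ)/(n:ℝ)):ℝ) *
      (((1-x)*(n:ℝ)/((n-k:ℕ):ℝ))^((((n-k:ℕ):ℝ)/(n:ℝ)):ℝ)))^(n:ℕ) ≤ 1 :=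
    pow_le_one₀ (mul_nonneg (Real.rpow_nonneg hA0 _) (Real.rpow_nonneg hB0 _)) h
  rw [mul_pow] at h2
  have eA : ((x*(n:ℝ)/(k:ℝ))^(((k:ℝ)/(n:ℝ)):ℝ))^(n:ℕ) = (x*(n:ℝ)/(k:ℝ))^(k:ℕ) := by
    rw [← Real.rpow_natCast ((x*(n:ℝ)/(k:ℝ))^(((k:ℝ)/(n:ℝ)):ℝ)) n,
      ← Real.rpow_mul hA0]
    rw [show (k:ℝ)/(n:ℝ)*((n:ℕ):ℝ) = ((k:ℕ):ℝ) by field_simp]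
    rw [Real.rpow_natCast]
  have eB : (((1-x)*(n:ℝ)/((n-k:ℕ):ℝ))^((((n-k:ℕ):ℝ)/(n:ℝ)):ℝ))^(n:ℕ)
      = ((1-x)*(n:ℝ)/((n-k:ℕ):ℝ))^((n-k:ℕ)) := by
    rw [← Real.rpow_natCast (((1-x)*(n:ℝ)/((n-k:ℕ):ℝ))^((((n-k:ℕ):ℝ)/(n:ℝ)):ℝ)) n,
      ← Real.rpow_mul hB0]
    rw [show ((n-k:ℕ):ℝ)/(n:ℝ)*((n:ℕ):ℝ) = (((n-k:ℕ)):ℝ) by field_simp]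
    rw [Real.rpow_natCast]
  rw [eA, eB] at h2
  have hNn : (n:ℝ)^n = (n:ℝ)^k * (n:ℝ)^(n-k) := by
    rw [← pow_add]; congr 1; omega
  have hexpand : (x*(n:ℝ)/(k:ℝ))^(k:ℕ) * ((1-x)*(n:ℝ)/((n-k:ℕ):ℝ))^((n-k:ℕ))
      = x^k*(1-x)^(n-k) * ((n:ℝ)^n/((k:ℝ)^k*((n-k:ℕ):ℝ)^(n-k))) := by
    rw [div_pow, div_pow, mul_pow, mul_pow, hNn]
    field_simp
  rw [hexpand] at h2
  rw [le_div_iff₀ (by positivity)]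
  have h3 := mul_le_mul_of_nonneg_right h2 (show (0:ℝ) ≤ (k:ℝ)^k*((n-k:ℕ):ℝ)^(n-k) by positivity)
  have heq : x^k*(1-x)^(n-k)*((n:ℝ)^n/((k:ℝ)^k*((n-k:ℕ):ℝ)^(n-k)))*((k:ℝ)^k*((n-k:ℕ):ℝ)^(n-k))
      = x^k*(1-x)^(n-k)*(n:ℝ)^n := by
    field_simp
  rw [heq, one_mul] at h3
  exact h3

lemma bern_bound {n k : ℕ} (hk1 : 1 ≤ k) (hkn : k < n) {x : ℝ} (hx0 : 0 ≤ x) (hx1 : x ≤ 1) :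
    (n.choose k : ℝ) * x^k * (1-x)^(n-k) ≤ Real.sqrt ((n:ℝ)/((k:ℝ)*((n-k:ℕ):ℝ))) := by
  have h1 := amgm_bound hk1 hkn hx0 hx1
  have h2 := choose_bound hk1 hkn
  calc (n.choose k:ℝ)*x^k*(1-x)^(n-k) = (n.choose k:ℝ)*(x^k*(1-x)^(n-k)) := by ring
    _ ≤ (n.choose k:ℝ)*((k:ℝ)^k*((n-k:ℕ):ℝ)^(n-k)/(n:ℝ)^n) := by
        apply mul_le_mul_of_nonneg_left h1 (by positivity)
    _ ≤ _ := h2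

noncomputable def bp (n k : ℕ) (x : ℝ) : ℝ := (n.choose k : ℝ) * x^k * (1-x)^(n-k)

lemma bp_nonneg (n k : ℕ) {x : ℝ} (hx0 : 0 ≤ x) (hx1 : x ≤ 1) : 0 ≤ bp n k x := by
  unfold bp
  have : (0:ℝ) ≤ 1 - x := by linarith
  positivity

lemma bp_sum (n : ℕ) (x : ℝ) : ∑ k ∈ Finset.range (n+1), bp n k x = 1 := by
  have h := add_pow x (1-x) n
  have h1 : x + (1-x) = 1 := by ring
  rw [h1, one_pow] at h
  calc ∑ k ∈ Finset.range (n+1), bp n k x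
      = ∑ k ∈ Finset.range (n+1), x^k * (1-x)^(n-k) * (n.choose k : ℝ) := by
        apply Finset.sum_congr rfl
        intro k _
        unfold bp
        ring
    _ = 1 := h.symm

lemma bp_ratio (n k : ℕ) (x : ℝ) :
    ((k:ℝ)+1) * (1-x) * bp n (k+1) x = ((n-k:ℕ):ℝ) * x * bp n k x := by
  unfold bp
  rcases lt_or_ge k n with h | h
  · have h1 : n - (k+1) + 1 = n - k := by omega
    have h2 := congrArg (Nat.cast : ℕ → ℝ) (Nat.choose_succ_right_eq n k)
    push_cast at h2
    have h3 : (1-x)^(n-k) = (1-x)^(n-(k+1)) * (1-x) := by rw [← pow_succ, h1]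
    rw [h3, pow_succ]
    linear_combination (x^(k+1)*(1-x)^(n-(k+1))*(1-x)) * h2
  · have hc : n.choose (k+1) = 0 := Nat.choose_eq_zero_of_lt (by omega)
    have hm : n - k = 0 := by omega
    rw [hc, hm]
    simp

lemma bp_unimodal (n : ℕ) {x : ℝ} (hx0 : 0 ≤ x) (hx1 : x ≤ 1) :
    ∃ m : ℕ, (∀ k, k < m → bp n k x ≤ bp n (k+1) x) ∧ (∀ k, m ≤ k → bp n (k+1) x ≤ bp n k x) := by
  refine ⟨min (⌊((n:ℝ)+1)*x⌋₊) n, ?_, ?_⟩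
  · intro k hk
    have hkn : k < n := lt_of_lt_of_le hk (min_le_right _ _)
    have hkfl : k + 1 ≤ ⌊((n:ℝ)+1)*x⌋₊ := lt_of_lt_of_le hk (min_le_left _ _)
    have hkx : ((k:ℝ)+1) ≤ ((n:ℝ)+1)*x := by
      calc ((k:ℝ)+1) ≤ (⌊((n:ℝ)+1)*x⌋₊ : ℝ) := by exact_mod_cast hkfl
        _ ≤ ((n:ℝ)+1)*x := Nat.floor_le (by positivity)
    rcases eq_or_lt_of_le hx1 with rfl | hx1'
    · have hz : bp n k 1 = 0 := by
        unfold bp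
        rw [show (1:ℝ)-1 = 0 by ring, zero_pow (by omega : n - k ≠ 0)]
        ring
      rw [hz]
      exact bp_nonneg n (k+1) hx0 hx1
    · have hcast : ((n-k:ℕ):ℝ) = (n:ℝ) - (k:ℝ) := by
        exact_mod_cast Nat.cast_sub hkn.le
      have h1x : (0:ℝ) < 1 - x := by linarith
      have hx0' : 0 < ((k:ℝ)+1)*(1-x) := by positivity
      have hge : ((k:ℝ)+1)*(1-x) ≤ ((n-k:ℕ):ℝ)*x := by
        rw [hcast]; nlinarith
      have hb0 := bp_nonneg n k hx0 hx1
      have hmul : ((k:ℝ)+1)*(1-x) * bp n k x ≤ ((k:ℝ)+1)*(1-x) * bp n (k+1) x := by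
        rw [bp_ratio]
        nlinarith
      exact le_of_mul_le_mul_left hmul hx0'
  · intro k hk
    rcases lt_or_ge k n with hkn | hkn
    · have hkfl : ⌊((n:ℝ)+1)*x⌋₊ ≤ k := by
        rcases le_total (⌊((n:ℝ)+1)*x⌋₊) n with h' | h'
        · rwa [min_eq_left h'] at hk
        · rw [min_eq_right h'] at hk; omega
      have hlt : ((n:ℝ)+1)*x < (k:ℝ)+1 := by
        calc ((n:ℝ)+1)*x < (⌊((n:ℝ)+1)*x⌋₊ : ℝ) + 1 := Nat.lt_floor_add_one _
          _ ≤ (k:ℝ)+1 := by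
              have : ((⌊((n:ℝ)+1)*x⌋₊:ℝ)) ≤ (k:ℝ) := by exact_mod_cast hkfl
              linarith
      have hkn' : (k:ℝ)+1 ≤ (n:ℝ) := by exact_mod_cast hkn
      have hx1' : x < 1 := by nlinarith
      have hcast : ((n-k:ℕ):ℝ) = (n:ℝ) - (k:ℝ) := by
        exact_mod_cast Nat.cast_sub hkn.le
      have h1x : (0:ℝ) < 1 - x := by linarith
      have hx0' : 0 < ((k:ℝ)+1)*(1-x) := by positivity
      have hle : ((n-k:ℕ):ℝ)*x ≤ ((k:ℝ)+1)*(1-x) := by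
        rw [hcast]; nlinarith
      have hb0 := bp_nonneg n k hx0 hx1
      have hmul : ((k:ℝ)+1)*(1-x) * bp n (k+1) x ≤ ((k:ℝ)+1)*(1-x) * bp n k x := by
        rw [bp_ratio]
        nlinarith
      exact le_of_mul_le_mul_left hmul hx0'
    · have hz : bp n (k+1) x = 0 := by
        unfold bp
        rw [Nat.choose_eq_zero_of_lt (by omega)]
        simp
      rw [hz]
      exact bp_nonneg n k hx0 hx1

section MainProof

open Filter

set_option maxHeartbeats 2000000 in
theorem bernstein_lattice_dense (f : ℝ → ℝ) (hf : ContinuousOn f (Set.Icc (0:ℝ) 1))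
    (hf0 : ∃ a : ℤ, f 0 = (a : ℝ)) (hf1 : ∃ b : ℤ, f 1 = (b : ℝ))
    (ε : ℝ) (hε : 0 < ε) :
    ∃ (n : ℕ) (q : ℕ → ℤ), ∀ x ∈ Set.Icc (0:ℝ) 1,
      |f x - ∑ k ∈ Finset.range (n + 1),
          (q k : ℝ) * ((n.choose k : ℝ) * x ^ k * (1 - x) ^ (n - k))| < ε := by
  obtain ⟨a, ha⟩ := hf0
  obtain ⟨b, hb⟩ := hf1
  set F : C(unitInterval, ℝ) :=
    ⟨Set.restrict (Set.Icc (0:ℝ) 1) f, ContinuousOn.restrict hf⟩ with hF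
  have hconv := bernsteinApproximation_uniform F
  rw [Metric.tendsto_atTop] at hconv
  obtain ⟨N₀, hN₀⟩ := hconv (ε/4) (by linarith)
  have huc : UniformContinuousOn f (Set.Icc (0:ℝ) 1) :=
    isCompact_Icc.uniformContinuousOn_of_continuous hf
  rw [Metric.uniformContinuousOn_iff] at huc
  obtain ⟨τ, hτpos, hτ⟩ := huc (ε/4) (by linarith)
  set K : ℕ := ⌈(288:ℝ)/ε^2⌉₊ with hK
  have hKbig : 3 * Real.sqrt (2/((K:ℝ)+1)) ≤ ε/4 := by
    have h1 : (288:ℝ)/ε^2 ≤ (K:ℝ) := Nat.le_ceil _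
    have h2 : (2:ℝ)/((K:ℝ)+1) ≤ ε^2/144 := by
      rw [div_le_div_iff₀ (by positivity) (by norm_num)]
      have h3 : (288:ℝ)/ε^2 * ε^2 = 288 := by field_simp
      nlinarith [h1, sq_nonneg ε, mul_le_mul_of_nonneg_right h1 (sq_nonneg ε)]
    calc 3 * Real.sqrt (2/((K:ℝ)+1)) ≤ 3 * Real.sqrt (ε^2/144) := by
          have := Real.sqrt_le_sqrt h2
          linarith
      _ = 3 * (ε/12) := by
          rw [show ε^2/144 = (ε/12)^2 by ring, Real.sqrt_sq (by positivity)]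
      _ = ε/4 := by ring
  set T : ℕ := ⌈(K:ℝ)/τ⌉₊ + 1 with hT
  set n : ℕ := N₀ + (2*K+2) + T with hn
  have hnN : N₀ ≤ n := by omega
  have hn2K : 2*K+2 ≤ n := by omega
  have hnpos : 0 < n := by omega
  have hnR : (0:ℝ) < (n:ℝ) := by exact_mod_cast hnpos
  have hKτ : (K:ℝ)/(n:ℝ) < τ := by
    have h1 : (K:ℝ)/τ ≤ (⌈(K:ℝ)/τ⌉₊:ℝ) := Nat.le_ceil _
    have h2 : ((⌈(K:ℝ)/τ⌉₊:ℝ)) + 1 ≤ (n:ℝ) := by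
      exact_mod_cast (by omega : ⌈(K:ℝ)/τ⌉₊ + 1 ≤ n)
    rw [div_lt_iff₀ hnR]
    have h3 : (K:ℝ) ≤ τ * ((⌈(K:ℝ)/τ⌉₊:ℝ)) := by
      calc (K:ℝ) = τ * ((K:ℝ)/τ) := by field_simp
        _ ≤ τ * (⌈(K:ℝ)/τ⌉₊:ℝ) := by nlinarith
    nlinarith
  set M : ℕ := n - K - 1 with hM
  have hKM : K < M := by omega
  set g : ℕ → ℝ := fun i => f ((i:ℝ)/(n:ℝ)) with hg
  set S : ℕ → ℝ := fun k => ∑ i ∈ Finset.Ico (K+1) (k+1), g i with hS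
  set q : ℕ → ℤ := fun k => if k ≤ K then a else if k ≤ M then ⌊S k⌋ - ⌊S (k-1)⌋ else b with hq
  refine ⟨n, q, ?_⟩
  intro x hx
  obtain ⟨hx0, hx1⟩ := hx
  have hbpx : ∀ k, 0 ≤ bp n k x := fun k => bp_nonneg n k hx0 hx1
  have hgoal : ∑ k ∈ Finset.range (n+1), (q k:ℝ) * ((n.choose k:ℝ)*x^k*(1-x)^(n-k))
      = ∑ k ∈ Finset.range (n+1), (q k:ℝ) * bp n k x := rfl
  rw [hgoal]
  -- membership of grid points
  have hmem : ∀ k : ℕ, k ≤ n → ((k:ℝ)/(n:ℝ)) ∈ Set.Icc (0:ℝ) 1 := by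
    intro k hk
    constructor
    · positivity
    · rw [div_le_one hnR]; exact_mod_cast hk
  have hmem0 : (0:ℝ) ∈ Set.Icc (0:ℝ) 1 := by constructor <;> norm_num
  have hmem1 : (1:ℝ) ∈ Set.Icc (0:ℝ) 1 := by constructor <;> norm_num
  -- Bernstein approximation bound
  have hxI : x ∈ unitInterval := ⟨hx0, hx1⟩
  have hdist := hN₀ n hnN
  have happly : (bernsteinApproximation n F) ⟨x, hxI⟩
      = ∑ k ∈ Finset.range (n+1), g k * bp n k x := by
    rw [bernsteinApproximation.apply]
    rw [← Fin.sum_univ_eq_sum_range (fun k => g k * bp n k x) (n+1)]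
    apply Finset.sum_congr rfl
    intro k _
    rw [bernstein_apply]
    rw [smul_eq_mul, mul_comm]; rfl
  have hp0 : |f x - ∑ k ∈ Finset.range (n+1), g k * bp n k x| < ε/4 := by
    have h1 : |(bernsteinApproximation n F) ⟨x, hxI⟩ - F ⟨x, hxI⟩| < ε/4 :=
      lt_of_le_of_lt
        (by rw [← Real.dist_eq]; exact ContinuousMap.dist_apply_le_dist _) hdist
    rw [happly] at h1
    rw [abs_sub_comm] at h1
    exact h1
  -- decomposition
  have hsplit : f x - ∑ k ∈ Finset.range (n+1), (q k:ℝ) * bp n k x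
      = (f x - ∑ k ∈ Finset.range (n+1), g k * bp n k x)
        + ((∑ k ∈ Finset.Ico 0 (K+1), (g k - (q k:ℝ)) * bp n k x)
        + (∑ k ∈ Finset.Ico (K+1) (M+1), (g k - (q k:ℝ)) * bp n k x)
        + (∑ k ∈ Finset.Ico (M+1) (n+1), (g k - (q k:ℝ)) * bp n k x)) := by
    rw [Finset.sum_Ico_consecutive (fun k => (g k - (q k:ℝ)) * bp n k x)
      (by omega : (0:ℕ) ≤ K+1) (by omega : K+1 ≤ M+1)]
    rw [Finset.sum_Ico_consecutive (fun k => (g k - (q k:ℝ)) * bp n k x)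
      (by omega : (0:ℕ) ≤ M+1) (by omega : M+1 ≤ n+1)]
    rw [← Finset.range_eq_Ico]
    have hd : ∑ k ∈ Finset.range (n+1), (g k - (q k:ℝ)) * bp n k x
        = (∑ k ∈ Finset.range (n+1), g k * bp n k x)
          - ∑ k ∈ Finset.range (n+1), (q k:ℝ) * bp n k x := by
      rw [← Finset.sum_sub_distrib]
      apply Finset.sum_congr rfl
      intro k _
      ring
    rw [hd]
    ring
  -- edge bounds
  have hedge : ∀ (s t : ℕ) (c : ℤ), (∀ k, s ≤ k → k < t → q k = c ∧ |g k - (c:ℝ)| ≤ ε/4) →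
      t ≤ n+1 →
      |∑ k ∈ Finset.Ico s t, (g k - (q k:ℝ)) * bp n k x| ≤ ε/4 := by
    intro s t c hc ht
    calc |∑ k ∈ Finset.Ico s t, (g k - (q k:ℝ)) * bp n k x|
        ≤ ∑ k ∈ Finset.Ico s t, |(g k - (q k:ℝ)) * bp n k x| :=
          Finset.abs_sum_le_sum_abs _ _
      _ ≤ ∑ k ∈ Finset.Ico s t, (ε/4) * bp n k x := by
          apply Finset.sum_le_sum
          intro k hk
          rw [Finset.mem_Ico] at hk
          obtain ⟨hqk, hgk⟩ := hc k hk.1 hk.2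
          rw [abs_mul, abs_of_nonneg (hbpx k), hqk]
          exact mul_le_mul_of_nonneg_right hgk (hbpx k)
      _ = (ε/4) * ∑ k ∈ Finset.Ico s t, bp n k x := by rw [Finset.mul_sum]
      _ ≤ (ε/4) * 1 := by
          apply mul_le_mul_of_nonneg_left _ (by linarith)
          rw [← bp_sum n x, Finset.range_eq_Ico]
          apply Finset.sum_le_sum_of_subset_of_nonneg
          · exact Finset.Ico_subset_Ico (by omega) ht
          · intro k _ _; exact hbpx k
      _ = ε/4 := by ring
  have hA : |∑ k ∈ Finset.Ico 0 (K+1), (g k - (q k:ℝ)) * bp n k x| ≤ ε/4 := by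
    apply hedge 0 (K+1) a _ (by omega)
    intro k _ hk
    have hkK : k ≤ K := by omega
    constructor
    · rw [hq]; simp only [if_pos hkK]
    · have hd : dist ((k:ℝ)/(n:ℝ)) (0:ℝ) < τ := by
        rw [Real.dist_eq, sub_zero, abs_of_nonneg (by positivity)]
        calc (k:ℝ)/(n:ℝ) ≤ (K:ℝ)/(n:ℝ) := by
              gcongr
          _ < τ := hKτ
      have := hτ ((k:ℝ)/(n:ℝ)) (hmem k (by omega)) 0 hmem0 hd
      rw [Real.dist_eq] at this
      rw [hg]
      simp only []
      rw [← ha]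
      exact le_of_lt this
  have hC : |∑ k ∈ Finset.Ico (M+1) (n+1), (g k - (q k:ℝ)) * bp n k x| ≤ ε/4 := by
    apply hedge (M+1) (n+1) b _ (by omega)
    intro k hk1 hk2
    have hkK : ¬ (k ≤ K) := by omega
    have hkM : ¬ (k ≤ M) := by omega
    constructor
    · rw [hq]; simp only [if_neg hkK, if_neg hkM]
    · have hkn : k ≤ n := by omega
      have hd : dist ((k:ℝ)/(n:ℝ)) (1:ℝ) < τ := by
        rw [Real.dist_eq]
        have hkn' : (k:ℝ) ≤ (n:ℝ) := by exact_mod_cast hkn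
        have h1 : (k:ℝ)/(n:ℝ) - 1 = -(((n:ℝ)-(k:ℝ))/(n:ℝ)) := by field_simp; ring
        rw [h1, abs_neg, abs_of_nonneg (div_nonneg (by linarith) hnR.le)]
        have h4 : ((n-k:ℕ):ℝ) = (n:ℝ)-(k:ℝ) := Nat.cast_sub hkn
        have h2 : (n:ℝ) - (k:ℝ) ≤ (K:ℝ) := by
          have h5 : n - k ≤ K := by omega
          calc (n:ℝ)-(k:ℝ) = ((n-k:ℕ):ℝ) := h4.symm
            _ ≤ (K:ℝ) := by exact_mod_cast h5
        calc ((n:ℝ)-(k:ℝ))/(n:ℝ) ≤ (K:ℝ)/(n:ℝ) := by gcongr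
          _ < τ := hKτ
      have h5 := hτ ((k:ℝ)/(n:ℝ)) (hmem k hkn) 1 hmem1 hd
      rw [Real.dist_eq] at h5
      rw [hg]
      simp only []
      rw [← hb]
      exact le_of_lt h5
  have hBd : ∀ k, K+1 ≤ k → k ≤ M → bp n k x ≤ Real.sqrt (2/((K:ℝ)+1)) := by
    intro k h1 h2
    have hk1 : 1 ≤ k := by omega
    have hkn : k < n := by omega
    have hb1 : bp n k x ≤ Real.sqrt ((n:ℝ)/((k:ℝ)*((n-k:ℕ):ℝ))) := by
      unfold bp; exact bern_bound hk1 hkn hx0 hx1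
    apply le_trans hb1
    apply Real.sqrt_le_sqrt
    have hc1 : ((K:ℝ)+1) ≤ (k:ℝ) := by exact_mod_cast (by omega : K+1 ≤ k)
    have hc2 : ((K:ℝ)+1) ≤ ((n-k:ℕ):ℝ) := by exact_mod_cast (by omega : K+1 ≤ n-k)
    have hc3 : ((n-k:ℕ):ℝ) = (n:ℝ)-(k:ℝ) := by exact_mod_cast Nat.cast_sub hkn.le
    have hc4 : (n:ℝ) = (k:ℝ) + ((n-k:ℕ):ℝ) := by rw [hc3]; ring
    have hKnn : (0:ℝ) ≤ (K:ℝ) := by positivity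
    have e1 : ((K:ℝ)+1)*((n-k:ℕ):ℝ) ≤ (k:ℝ)*((n-k:ℕ):ℝ) :=
      mul_le_mul_of_nonneg_right hc1 (by linarith)
    have e2 : (k:ℝ)*((K:ℝ)+1) ≤ (k:ℝ)*((n-k:ℕ):ℝ) :=
      mul_le_mul_of_nonneg_left hc2 (by linarith)
    rw [div_le_div_iff₀ (by nlinarith) (by positivity : (0:ℝ) < (K:ℝ)+1)]
    nlinarith [e1, e2, hc4]
  have hmid : |∑ k ∈ Finset.Ico (K+1) (M+1), (g k - (q k:ℝ)) * bp n k x|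
      ≤ 3 * Real.sqrt (2/((K:ℝ)+1)) := by
    have hrw : ∀ k ∈ Finset.Ico (K+1) (M+1), (g k - (q k:ℝ)) * bp n k x
        = (Int.fract (S k) - Int.fract (S (k-1))) * bp n k x := by
      intro k hk
      rw [Finset.mem_Ico] at hk
      have hk1 : K+1 ≤ k := hk.1
      have hk2 : k ≤ M := by omega
      have hqk : q k = ⌊S k⌋ - ⌊S (k-1)⌋ := by
        rw [hq]; simp only [if_neg (by omega : ¬ k ≤ K), if_pos hk2]
      have hSd : S k - S (k-1) = g k := by
        rw [hS]
        simp only []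
        rw [show k - 1 + 1 = k from by omega]
        rw [Finset.sum_Ico_succ_top (by omega : K+1 ≤ k)]
        ring
      rw [hqk]
      push_cast
      rw [Int.fract, Int.fract]
      congr 1
      linarith [hSd]
    rw [Finset.sum_congr rfl hrw]
    have habel := abel_sum (fun k => Int.fract (S k)) (fun k => bp n k x) K M hKM
    rw [habel]
    have hSK : S K = 0 := by
      rw [hS]
      simp only []
      rw [Finset.Ico_self, Finset.sum_empty]
    rw [hSK, Int.fract_zero, zero_mul, sub_zero]
    obtain ⟨m, hup, hdn⟩ := bp_unimodal n hx0 hx1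
    have htv := tv_bound (fun k => bp n k x) (Real.sqrt (2/((K:ℝ)+1))) (Real.sqrt_nonneg _)
      m (K+1) M hup hdn hbpx (fun k hk1 hk2 => hBd k hk1 hk2)
    calc |(∑ k ∈ Finset.Ico (K+1) M, Int.fract (S k) * (bp n k x - bp n (k+1) x))
          + Int.fract (S M) * bp n M x|
        ≤ |∑ k ∈ Finset.Ico (K+1) M, Int.fract (S k) * (bp n k x - bp n (k+1) x)|
          + |Int.fract (S M) * bp n M x| := abs_add_le _ _
      _ ≤ (∑ k ∈ Finset.Ico (K+1) M, |bp n k x - bp n (k+1) x|) + bp n M x := by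
          apply add_le_add
          · calc |∑ k ∈ Finset.Ico (K+1) M, Int.fract (S k) * (bp n k x - bp n (k+1) x)|
                ≤ ∑ k ∈ Finset.Ico (K+1) M, |Int.fract (S k) * (bp n k x - bp n (k+1) x)| :=
                  Finset.abs_sum_le_sum_abs _ _
              _ ≤ ∑ k ∈ Finset.Ico (K+1) M, |bp n k x - bp n (k+1) x| := by
                  apply Finset.sum_le_sum
                  intro k _
                  rw [abs_mul, abs_of_nonneg (Int.fract_nonneg _)]
                  exact mul_le_of_le_one_left (abs_nonneg _) (Int.fract_lt_one _).le
          · rw [abs_mul, abs_of_nonneg (Int.fract_nonneg _), abs_of_nonneg (hbpx M)]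
            exact mul_le_of_le_one_left (hbpx M) (Int.fract_lt_one _).le
      _ ≤ 2 * Real.sqrt (2/((K:ℝ)+1)) + Real.sqrt (2/((K:ℝ)+1)) :=
          add_le_add htv (hBd M (by omega) le_rfl)
      _ = 3 * Real.sqrt (2/((K:ℝ)+1)) := by ring
  calc |f x - ∑ k ∈ Finset.range (n+1), (q k:ℝ) * bp n k x|
      = |(f x - ∑ k ∈ Finset.range (n+1), g k * bp n k x)
        + ((∑ k ∈ Finset.Ico 0 (K+1), (g k - (q k:ℝ)) * bp n k x)
        + (∑ k ∈ Finset.Ico (K+1) (M+1), (g k - (q k:ℝ)) * bp n k x)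
        + (∑ k ∈ Finset.Ico (M+1) (n+1), (g k - (q k:ℝ)) * bp n k x))| := by rw [← hsplit]
    _ ≤ |f x - ∑ k ∈ Finset.range (n+1), g k * bp n k x|
        + (|∑ k ∈ Finset.Ico 0 (K+1), (g k - (q k:ℝ)) * bp n k x|
        + |∑ k ∈ Finset.Ico (K+1) (M+1), (g k - (q k:ℝ)) * bp n k x|
        + |∑ k ∈ Finset.Ico (M+1) (n+1), (g k - (q k:ℝ)) * bp n k x|) := by
        apply le_trans (abs_add_le _ _)
        exact add_le_add le_rfl (abs_add_three _ _ _)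
    _ < ε := by
        have h3 : |∑ k ∈ Finset.Ico (K+1) (M+1), (g k - (q k:ℝ)) * bp n k x| ≤ ε/4 :=
          le_trans hmid hKbig
        linarith [hp0, hA, hC, h3]

end MainProof
end
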